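/- The number of Laguerre histories of length 2n is n!, where a Laguerre history of shape D (D a Dyck path of length 2n) is a function assigning to each up step of D from height h to h+1 an integer in {1, ..., ⌊h/2⌋+1}. -/

import Mathlib

/-- A Dyck word: every prefix has at least as many up steps (`true`) as down
steps (`false`), and the total numbers of up and down steps are equal. -/
def IsDyck (w : List Bool) : Prop :=
  (∀ p : ℕ, (w.take p).count false ≤ (w.take p).count true) ∧
    w.count false = w.count true

/-- The height of the path `w` after `i` steps. -/
def hgt (w : List Bool) (i : ℕ) : ℤ :=
  ((w.take i).count true : ℤ) - ((w.take i).count false : ℤ)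

/-- Height in ℕ. -/
def hgtN (w : List Bool) (i : ℕ) : ℕ :=
  (w.take i).count true - (w.take i).count false

/-- Number of choices at step `i`. -/
def stepc (w : List Bool) (i : ℕ) : ℕ :=
  if w[i]? = some true then hgtN w i / 2 + 1 else 1

/-- Weight of a word. -/
def wt (w : List Bool) : ℕ := ∏ i ∈ Finset.range w.length, stepc w i

-- Nonnegative-prefix words of length `m` ending at height `k`.
open Classical in
noncomputable def endsF (m k : ℕ) : Finset (List Bool) :=
  ((Finset.univ : Finset (Fin m → Bool)).image List.ofFn).filter
    (fun w => (∀ p ∈ Finset.range (m+1),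
        (w.take p).count false ≤ (w.take p).count true)
       ∧ w.count true = w.count false + k)

lemma mem_endsF {m k : ℕ} {w : List Bool} :
    w ∈ endsF m k ↔ w.length = m ∧
      (∀ p : ℕ, (w.take p).count false ≤ (w.take p).count true) ∧
      w.count true = w.count false + k := by
  simp only [endsF, Finset.mem_filter, Finset.mem_image, Finset.mem_univ, true_and,
    Finset.mem_range]
  constructor
  · rintro ⟨⟨v, rfl⟩, h1, h2⟩
    refine ⟨by simp, fun p => ?_, h2⟩
    rcases le_or_gt p (List.ofFn v).length with h | h
    · exact h1 p (by simp at h ⊢; omega)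
    · rw [List.take_of_length_le h.le]
      have := h1 (List.ofFn v).length (by simp)
      rwa [List.take_of_length_le le_rfl] at this
  · rintro ⟨h0, h1, h2⟩
    subst h0
    exact ⟨⟨fun i => w[(i : ℕ)], (List.ofFn_getElem (xs := w))⟩, fun p _ => h1 p, h2⟩

lemma wt_concat (u : List Bool) (b : Bool) :
    wt (u ++ [b]) = wt u *
      (if b then (u.count true - u.count false) / 2 + 1 else 1) := by
  unfold wt
  rw [show (u ++ [b]).length = u.length + 1 by simp, Finset.prod_range_succ]
  congr 1
  · refine Finset.prod_congr rfl fun i hi => ?_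
    rw [Finset.mem_range] at hi
    unfold stepc hgtN
    rw [List.getElem?_append, if_pos hi, List.take_append_of_le_length hi.le]
  · unfold stepc hgtN
    rw [List.getElem?_concat_length, List.take_left]
    cases b <;> simp

noncomputable def G (m k : ℕ) : ℕ := ∑ w ∈ endsF m k, wt w

lemma endsF_zero_zero : endsF 0 0 = {([] : List Bool)} := by
  ext w
  rw [mem_endsF, Finset.mem_singleton]
  constructor
  · rintro ⟨h, -, -⟩; exact List.length_eq_zero_iff.mp h
  · rintro rfl; simp

lemma G_zero_zero : G 0 0 = 1 := by
  simp [G, endsF_zero_zero, wt]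

lemma G_eq_zero_of_lt {m k : ℕ} (h : m < k) : G m k = 0 := by
  refine Finset.sum_eq_zero fun w hw => ?_
  exfalso
  obtain ⟨hl, -, hc⟩ := mem_endsF.mp hw
  have := List.count_le_length (a := true) (l := w)
  omega

lemma prefix_concat {u : List Bool} {b : Bool}
    (h : ∀ p : ℕ, ((u ++ [b]).take p).count false ≤ ((u ++ [b]).take p).count true) :
    ∀ p : ℕ, (u.take p).count false ≤ (u.take p).count true := by
  intro p
  rcases le_or_gt p u.length with hp | hp
  · have := h p
    rwa [List.take_append_of_le_length hp] at this
  · rw [List.take_of_length_le hp.le]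
    have := h u.length
    rwa [List.take_append_of_le_length le_rfl, List.take_of_length_le le_rfl] at this

lemma prefix_concat' {u : List Bool} {b : Bool}
    (h1 : ∀ p : ℕ, (u.take p).count false ≤ (u.take p).count true)
    (h2 : (u ++ [b]).count false ≤ (u ++ [b]).count true) :
    ∀ p : ℕ, ((u ++ [b]).take p).count false ≤ ((u ++ [b]).take p).count true := by
  intro p
  rcases le_or_gt p u.length with hp | hp
  · rw [List.take_append_of_le_length hp]; exact h1 p
  · rw [List.take_of_length_le (by simp; omega)]; exact h2

lemma concat_false_mem {m k : ℕ} {u : List Bool} :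
    u ++ [false] ∈ endsF (m+1) k ↔ u ∈ endsF m (k+1) := by
  rw [mem_endsF, mem_endsF]
  simp only [List.count_append, List.length_append]
  constructor
  · rintro ⟨hl, hp, hc⟩
    simp at hl hc
    exact ⟨hl, prefix_concat hp, by omega⟩
  · rintro ⟨hl, hp, hc⟩
    refine ⟨by simp [hl], prefix_concat' hp (by simp [List.count_append]; omega), by simp; omega⟩

lemma concat_true_mem {m k : ℕ} {u : List Bool} :
    u ++ [true] ∈ endsF (m+1) (k+1) ↔ u ∈ endsF m k := by
  rw [mem_endsF, mem_endsF]
  constructor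
  · rintro ⟨hl, hp, hc⟩
    simp at hl hc
    exact ⟨hl, prefix_concat hp, by omega⟩
  · rintro ⟨hl, hp, hc⟩
    refine ⟨by simp [hl], prefix_concat' hp (by simp [List.count_append]; omega),
      by simp [List.count_append]; omega⟩

lemma concat_true_not_mem {m : ℕ} {u : List Bool} :
    u ++ [true] ∉ endsF (m+1) 0 := by
  intro hw
  obtain ⟨hl, hp, hc⟩ := mem_endsF.mp hw
  have h2 := prefix_concat hp u.length
  rw [List.take_of_length_le le_rfl] at h2
  simp [List.count_append] at hc
  omega

lemma endsF_succ_zero (m : ℕ) :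
    endsF (m+1) 0 = (endsF m 1).image (· ++ [false]) := by
  ext w
  simp only [Finset.mem_image]
  constructor
  · intro hw
    have hne : w ≠ [] := by
      intro h
      have := (mem_endsF.mp hw).1
      simp [h] at this
    obtain ⟨u, b, rfl⟩ : ∃ u b, w = u ++ [b] :=
      ⟨w.dropLast, w.getLast hne, (List.dropLast_append_getLast hne).symm⟩
    cases b
    · exact ⟨u, concat_false_mem.mp hw, rfl⟩
    · exact absurd hw concat_true_not_mem
  · rintro ⟨u, hu, rfl⟩
    exact concat_false_mem.mpr hu

lemma endsF_succ_succ (m k : ℕ) :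
    endsF (m+1) (k+1) =
      (endsF m (k+2)).image (· ++ [false]) ∪ (endsF m k).image (· ++ [true]) := by
  ext w
  simp only [Finset.mem_union, Finset.mem_image]
  constructor
  · intro hw
    have hne : w ≠ [] := by
      intro h
      have := (mem_endsF.mp hw).1
      simp [h] at this
    obtain ⟨u, b, rfl⟩ : ∃ u b, w = u ++ [b] :=
      ⟨w.dropLast, w.getLast hne, (List.dropLast_append_getLast hne).symm⟩
    cases b
    · exact Or.inl ⟨u, concat_false_mem.mp hw, rfl⟩
    · exact Or.inr ⟨u, concat_true_mem.mp hw, rfl⟩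
  · rintro (⟨u, hu, rfl⟩ | ⟨u, hu, rfl⟩)
    · exact concat_false_mem.mpr hu
    · exact concat_true_mem.mpr hu

lemma concat_inj (b : Bool) : ∀ x ∈ (s : Finset (List Bool)), ∀ y ∈ s,
    x ++ [b] = y ++ [b] → x = y := by
  intro x _ y _ h
  simpa using h

lemma G_succ_zero (m : ℕ) : G (m+1) 0 = G m 1 := by
  unfold G
  rw [endsF_succ_zero, Finset.sum_image (concat_inj false)]
  refine Finset.sum_congr rfl fun u hu => ?_
  rw [wt_concat]; simp

lemma G_succ_succ (m k : ℕ) :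
    G (m+1) (k+1) = G m (k+2) + (k/2 + 1) * G m k := by
  unfold G
  have hdisj : Disjoint ((endsF m (k+2)).image (· ++ [false]))
      ((endsF m k).image (· ++ [true])) := by
    rw [Finset.disjoint_left]
    intro a ha hb
    simp only [Finset.mem_image] at ha hb
    obtain ⟨u, -, rfl⟩ := ha
    obtain ⟨v, -, heq⟩ := hb
    have := congrArg List.getLast? heq
    simp at this
  rw [endsF_succ_succ, Finset.sum_union hdisj, Finset.sum_image (concat_inj false),
    Finset.sum_image (concat_inj true)]
  congr 1
  · refine Finset.sum_congr rfl fun u hu => ?_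
    rw [wt_concat]; simp
  · rw [Finset.mul_sum]
    refine Finset.sum_congr rfl fun u hu => ?_
    obtain ⟨-, -, hc⟩ := mem_endsF.mp hu
    rw [wt_concat]
    have : u.count true - u.count false = k := by omega
    rw [this]
    simp [Nat.mul_comm]

lemma GB_of_GA (n : ℕ)
    (hA : ∀ k ≤ n, G (2*n) (2*k) * (n-k).factorial = n.factorial * n.factorial) :
    ∀ k ≤ n, G (2*n+1) (2*k+1) * (n-k).factorial
      = (n+1).factorial * n.factorial := by
  intro k hk
  have hrec : G (2*n+1) (2*k+1) = G (2*n) (2*k+2) + (k+1) * G (2*n) (2*k) := by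
    have h := G_succ_succ (2*n) (2*k)
    rw [show (2*k)/2 = k by omega] at h
    exact h
  rcases eq_or_lt_of_le hk with rfl | hlt
  · have h2 : G (2*k) (2*k+2) = 0 := G_eq_zero_of_lt (by omega)
    have hG := hA k le_rfl
    rw [Nat.sub_self, Nat.factorial_zero, Nat.mul_one] at hG
    rw [hrec, h2, Nat.sub_self, Nat.factorial_zero, Nat.mul_one, hG, Nat.factorial_succ]
    ring
  · have h1 := hA (k+1) (by omega)
    have h2 := hA k hk
    rw [show 2*(k+1) = 2*k+2 by ring] at h1
    have hnk : n - k = (n - (k+1)) + 1 := by omega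
    have h2' : G (2*n) (2*k) * ((n-(k+1)+1) * (n-(k+1)).factorial)
        = n.factorial * n.factorial := by
      rw [← Nat.factorial_succ, ← hnk]; exact h2
    rw [hrec, hnk, Nat.factorial_succ]
    have expand : (G (2*n) (2*k+2) + (k+1) * G (2*n) (2*k)) *
        ((n-(k+1)+1) * (n-(k+1)).factorial)
      = G (2*n) (2*k+2) * (n-(k+1)).factorial * (n-(k+1)+1)
        + (k+1) * (G (2*n) (2*k) * ((n-(k+1)+1) * (n-(k+1)).factorial)) := by ring
    rw [expand, h1, h2']
    have hn1 : (n-(k+1)+1) + (k+1) = n + 1 := by omega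
    calc n.factorial * n.factorial * (n-(k+1)+1) + (k+1) * (n.factorial * n.factorial)
        = ((n-(k+1)+1) + (k+1)) * (n.factorial * n.factorial) := by ring
      _ = (n+1).factorial * n.factorial := by rw [hn1, Nat.factorial_succ]; ring

lemma GA : ∀ n : ℕ, ∀ k ≤ n,
    G (2*n) (2*k) * (n-k).factorial = n.factorial * n.factorial := by
  intro n
  induction n with
  | zero =>
    intro k hk
    interval_cases k
    simp [G_zero_zero]
  | succ n ih =>
    have hB := GB_of_GA n ih
    intro k hk
    match k with
    | 0 =>
      have hb0 := hB 0 (Nat.zero_le n)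
      simp only [Nat.mul_zero, Nat.sub_zero, Nat.zero_add] at hb0
      have hG1 : G (2*n+1) 1 = (n+1).factorial :=
        Nat.eq_of_mul_eq_mul_right n.factorial_pos hb0
      have hz : G (2*(n+1)) 0 = G (2*n+1) 1 := by
        rw [show 2*(n+1) = (2*n+1)+1 by ring]
        exact G_succ_zero (2*n+1)
      simp only [Nat.mul_zero, Nat.sub_zero]
      rw [hz, hG1]
    | (k+1) =>
      have hrec : G (2*(n+1)) (2*(k+1)) = G (2*n+1) (2*k+3) + (k+1) * G (2*n+1) (2*k+1) := by
        have h := G_succ_succ (2*n+1) (2*k+1)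
        rw [show (2*k+1)/2 = k by omega] at h
        rw [show 2*(n+1) = (2*n+1)+1 by ring, show 2*(k+1) = (2*k+1)+1 by ring]
        rw [show (2*k+1)+1+1 = 2*k+3 by ring] at h
        exact h
      rcases eq_or_lt_of_le hk with heq | hlt
      · have hkn : k = n := by omega
        subst hkn
        have h2 : G (2*k+1) (2*k+3) = 0 := G_eq_zero_of_lt (by omega)
        have hb := hB k le_rfl
        rw [Nat.sub_self, Nat.factorial_zero, Nat.mul_one] at hb
        rw [hrec, h2, Nat.sub_self, Nat.factorial_zero, Nat.mul_one, hb,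
          Nat.factorial_succ]
        ring
      · have hk' : k + 1 ≤ n := by omega
        have h1 := hB (k+1) hk'
        have h2 := hB k (by omega)
        rw [show 2*(k+1)+1 = 2*k+3 by ring] at h1
        have hnk : n - k = (n - (k+1)) + 1 := by omega
        have hnk2 : n + 1 - (k+1) = (n - (k+1)) + 1 := by omega
        have h2' : G (2*n+1) (2*k+1) * ((n-(k+1)+1) * (n-(k+1)).factorial)
            = (n+1).factorial * n.factorial := by
          rw [← Nat.factorial_succ, ← hnk]; exact h2
        rw [hrec, hnk2, Nat.factorial_succ]
        have expand : (G (2*n+1) (2*k+3) + (k+1) * G (2*n+1) (2*k+1)) *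
            ((n-(k+1)+1) * (n-(k+1)).factorial)
          = G (2*n+1) (2*k+3) * (n-(k+1)).factorial * (n-(k+1)+1)
            + (k+1) * (G (2*n+1) (2*k+1) * ((n-(k+1)+1) * (n-(k+1)).factorial)) := by ring
        rw [expand, h1, h2']
        have hn1 : (n-(k+1)+1) + (k+1) = n + 1 := by omega
        calc (n+1).factorial * n.factorial * (n-(k+1)+1)
              + (k+1) * ((n+1).factorial * n.factorial)
            = ((n-(k+1)+1) + (k+1)) * ((n+1).factorial * n.factorial) := by ring
          _ = (n+1).factorial * ((n+1) * n.factorial) := by rw [hn1]; ring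
          _ = (n+1).factorial * (n+1).factorial := by rw [← Nat.factorial_succ]

lemma G_eq_factorial (n : ℕ) : G (2*n) 0 = n.factorial := by
  have h := GA n 0 (Nat.zero_le n)
  simp only [Nat.mul_zero, Nat.sub_zero] at h
  exact Nat.eq_of_mul_eq_mul_right n.factorial_pos h

lemma hgt_eq {w : List Bool}
    (hw : ∀ p : ℕ, (w.take p).count false ≤ (w.take p).count true) (i : ℕ) :
    hgt w i = (hgtN w i : ℤ) := by
  unfold hgt hgtN
  rw [Nat.cast_sub (hw i)]

lemma cond_iff {w : List Bool}
    (hw : ∀ p : ℕ, (w.take p).count false ≤ (w.take p).count true) (i : ℕ) (x : ℕ) :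
    ((x : ℤ) ≤ hgt w i / 2 + 1) ↔ x ≤ hgtN w i / 2 + 1 := by
  rw [hgt_eq hw i,
    show ((hgtN w i : ℕ) : ℤ)/2 = ((hgtN w i / 2 : ℕ) : ℤ) from (Int.natCast_ediv _ 2).symm]
  constructor
  · intro h; exact_mod_cast h
  · intro h; exact_mod_cast h

noncomputable def fiberEquiv (w : List Bool)
    (hw : ∀ p : ℕ, (w.take p).count false ≤ (w.take p).count true) :
    {f : ℕ → ℕ //
      (∀ i : ℕ, w[i]? = some true → 1 ≤ f i ∧ (f i : ℤ) ≤ hgt w i / 2 + 1) ∧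
      (∀ i : ℕ, ¬w[i]? = some true → f i = 0)} ≃
    (∀ i : Fin w.length, Fin (stepc w (i : ℕ))) where
  toFun f := fun i => ⟨f.1 i - 1, by
    by_cases hb : w[(i : ℕ)]? = some true
    · have h1 := f.2.1 i hb
      have h2 : f.1 i ≤ hgtN w i / 2 + 1 := (cond_iff hw i _).mp h1.2
      unfold stepc; rw [if_pos hb]; omega
    · have := f.2.2 i hb
      unfold stepc; rw [if_neg hb]; omega⟩
  invFun g := ⟨fun j =>
      if h : j < w.length then (if w[j] = true then ((g ⟨j, h⟩) : ℕ) + 1 else 0) else 0, by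
    constructor
    · intro i hi
      obtain ⟨hlt, hval⟩ := List.getElem?_eq_some_iff.mp hi
      simp only [dif_pos hlt, if_pos hval]
      refine ⟨by omega, ?_⟩
      have hg : ((g ⟨i, hlt⟩ : Fin _) : ℕ) < hgtN w i / 2 + 1 := by
        have h2 := (g ⟨i, hlt⟩).2
        unfold stepc at h2
        simpa [hi] using h2
      exact (cond_iff hw i _).mpr (by omega)
    · intro i hi
      by_cases hlt : i < w.length
      · have hb : ¬ w[i] = true := fun hval =>
          hi (by rw [List.getElem?_eq_getElem hlt, hval])
        simp only [dif_pos hlt, if_neg hb]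
      · simp only [dif_neg hlt]⟩
  left_inv f := by
    apply Subtype.ext
    funext j
    dsimp only
    by_cases hlt : j < w.length
    · rw [dif_pos hlt]
      by_cases hb : w[j] = true
      · rw [if_pos hb]
        have h1 := f.2.1 j (by rw [List.getElem?_eq_getElem hlt, hb])
        omega
      · rw [if_neg hb]
        refine (f.2.2 j ?_).symm
        rw [List.getElem?_eq_getElem hlt]
        simp only [Option.some_inj]
        exact hb
    · rw [dif_neg hlt]
      refine (f.2.2 j ?_).symm
      rw [List.getElem?_eq_none (by omega)]
      simp
  right_inv g := by
    funext i
    apply Fin.ext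
    dsimp only
    rw [dif_pos i.isLt]
    by_cases hb : w[(i : ℕ)] = true
    · rw [if_pos hb]
      simp
    · rw [if_neg hb]
      have hg := (g i).2
      have hs : stepc w (i : ℕ) = 1 := by
        unfold stepc
        rw [if_neg]
        intro h
        obtain ⟨h1, hv⟩ := List.getElem?_eq_some_iff.mp h
        exact hb hv
      omega

theorem card_laguerre_histories (n : ℕ) :
    {p : List Bool × (ℕ → ℕ) |
      IsDyck p.1 ∧ p.1.length = 2 * n ∧
      (∀ i : ℕ, p.1[i]? = some true →
        1 ≤ p.2 i ∧ (p.2 i : ℤ) ≤ hgt p.1 i / 2 + 1) ∧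
      (∀ i : ℕ, ¬p.1[i]? = some true → p.2 i = 0)}.ncard
      = Nat.factorial n := by
  classical
  rw [← Nat.card_coe_set_eq]
  have e : {p : List Bool × (ℕ → ℕ) |
      IsDyck p.1 ∧ p.1.length = 2 * n ∧
      (∀ i : ℕ, p.1[i]? = some true →
        1 ≤ p.2 i ∧ (p.2 i : ℤ) ≤ hgt p.1 i / 2 + 1) ∧
      (∀ i : ℕ, ¬p.1[i]? = some true → p.2 i = 0)} ≃
      Σ w : (endsF (2*n) 0), {f : ℕ → ℕ //
        (∀ i : ℕ, (w : List Bool)[i]? = some true →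
          1 ≤ f i ∧ (f i : ℤ) ≤ hgt (w : List Bool) i / 2 + 1) ∧
        (∀ i : ℕ, ¬(w : List Bool)[i]? = some true → f i = 0)} :=
    { toFun := fun p => ⟨⟨p.1.1, mem_endsF.mpr ⟨p.2.2.1, p.2.1.1,
        by have := p.2.1.2; omega⟩⟩, ⟨p.1.2, p.2.2.2.1, p.2.2.2.2⟩⟩
      invFun := fun q => ⟨(q.1.1, q.2.1),
        ⟨⟨(mem_endsF.mp q.1.2).2.1, by
          show List.count false q.1.1 = List.count true q.1.1
          have := (mem_endsF.mp q.1.2).2.2; omega⟩,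
          (mem_endsF.mp q.1.2).1, q.2.2.1, q.2.2.2⟩⟩
      left_inv := fun p => rfl
      right_inv := fun q => rfl }
  rw [Nat.card_congr (e.trans (Equiv.sigmaCongrRight
    (fun w => fiberEquiv w.1 (mem_endsF.mp w.2).2.1)))]
  rw [Nat.card_eq_fintype_card, Fintype.card_sigma]
  have hcard : ∀ w : (endsF (2*n) 0),
      Fintype.card (∀ i : Fin (w : List Bool).length, Fin (stepc (w : List Bool) (i : ℕ)))
        = wt w.1 := by
    intro w
    rw [Fintype.card_pi]
    simp only [Fintype.card_fin]
    exact Fin.prod_univ_eq_prod_range (stepc w.1) w.1.length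
  rw [Finset.sum_congr rfl (fun w _ => hcard w)]
  rw [Finset.sum_coe_sort (endsF (2*n) 0) wt]
  exact G_eq_factorial n
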